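/- Fix an integer x ≥ 1, and define f : ℤ → ℕ by f(m) = 2 for all 1−x ≤ m ≤ 1 and f(m) = f(m−1) + f(m−x−1) for all m ≥ 2. Then for every m ≥ 1, the cardinality of the S-LOCO code SC(m,x) equals f(m). -/
import Mathlib


/-- The S-LOCO code: binary words of length `m` (position `m-1` most significant)
containing no contiguous subword of the form `0 1^j 0` or `1 0^j 1` with `1 ≤ j ≤ x`. -/
def SC (m x : ℕ) : Set (Fin m → Fin 2) :=
  {c | ¬ ∃ (i j : ℕ) (h : i + j + 1 < m), 1 ≤ j ∧ j ≤ x ∧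
      ((c ⟨i + j + 1, h⟩ = 0 ∧ (∀ k (_ : 1 ≤ k) (_ : k ≤ j), c ⟨i + k, by omega⟩ = 1) ∧
          c ⟨i, by omega⟩ = 0) ∨
       (c ⟨i + j + 1, h⟩ = 1 ∧ (∀ k (_ : 1 ≤ k) (_ : k ≤ j), c ⟨i + k, by omega⟩ = 0) ∧
          c ⟨i, by omega⟩ = 1))}

lemma fin2_eq_of_ne_ne : ∀ {a b d : Fin 2}, a ≠ d → b ≠ d → a = b := by decide
lemma fin2_eq_add_one : ∀ {a b : Fin 2}, a ≠ b → a = b + 1 := by decide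
lemma fin2_add_one_ne : ∀ (a : Fin 2), a + 1 ≠ a := by decide
lemma fin2_cases' : ∀ (a : Fin 2), a = 0 ∨ a = 1 := by decide

lemma cidx {m : ℕ} (c : Fin m → Fin 2) {a b : ℕ} (hab : a = b) (ha : a < m) (hb : b < m) :
    c ⟨a, ha⟩ = c ⟨b, hb⟩ := by subst hab; rfl

lemma mem_SC {m x : ℕ} {c : Fin m → Fin 2} :
    c ∈ SC m x ↔ ∀ i j (h : i + j + 1 < m) (_ : 1 ≤ j) (_ : j ≤ x),
      c ⟨i, by omega⟩ = c ⟨i + j + 1, h⟩ →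
      ∃ k, ∃ _ : 1 ≤ k, ∃ _ : k ≤ j, c ⟨i + k, by omega⟩ = c ⟨i, by omega⟩ := by
  unfold SC
  rw [Set.mem_setOf_eq]
  constructor
  · intro hne i j h hj1 hjx heq
    by_contra hcon
    push_neg at hcon
    apply hne
    refine ⟨i, j, h, hj1, hjx, ?_⟩
    rcases fin2_cases' (c ⟨i, by omega⟩) with h0 | h1
    · left
      refine ⟨heq.symm.trans h0, ?_, h0⟩
      intro k hk1 hkj
      have hne' := hcon k hk1 hkj
      rcases fin2_cases' (c ⟨i + k, by omega⟩) with g | g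
      · exact absurd (g.trans h0.symm) hne'
      · exact g
    · right
      refine ⟨heq.symm.trans h1, ?_, h1⟩
      intro k hk1 hkj
      have hne' := hcon k hk1 hkj
      rcases fin2_cases' (c ⟨i + k, by omega⟩) with g | g
      · exact g
      · exact absurd (g.trans h1.symm) hne'
  · rintro hforall ⟨i, j, h, hj1, hjx, hpat⟩
    rcases hpat with ⟨htop, hmid, hbot⟩ | ⟨htop, hmid, hbot⟩
    · obtain ⟨k, hk1, hkj, hkeq⟩ := hforall i j h hj1 hjx (hbot.trans htop.symm)
      have h2 := hmid k hk1 hkj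
      rw [hkeq, hbot] at h2
      exact absurd h2 (by decide)
    · obtain ⟨k, hk1, hkj, hkeq⟩ := hforall i j h hj1 hjx (hbot.trans htop.symm)
      have h2 := hmid k hk1 hkj
      rw [hkeq, hbot] at h2
      exact absurd h2 (by decide)

lemma restrict_mem {x m m' : ℕ} (hmm : m' ≤ m) {c : Fin m → Fin 2} (hc : c ∈ SC m x) :
    (fun i : Fin m' => c ⟨i.val, lt_of_lt_of_le i.isLt hmm⟩) ∈ SC m' x := by
  rw [mem_SC] at hc ⊢
  intro i j h hj1 hjx heq
  obtain ⟨k, hk1, hkj, hkeq⟩ := hc i j (by omega) hj1 hjx heq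
  exact ⟨k, hk1, hkj, hkeq⟩

lemma run_const {x m : ℕ} {c : Fin m → Fin 2} (hc : c ∈ SC m x) (hm : 2 ≤ m)
    (hne : c ⟨m-1, by omega⟩ ≠ c ⟨m-2, by omega⟩) :
    ∀ k, 1 ≤ k → k ≤ x + 1 → k ≤ m - 1 → c ⟨m-1-k, by omega⟩ = c ⟨m-2, by omega⟩ := by
  intro k
  induction k using Nat.strong_induction_on with
  | _ k ih =>
    intro hk1 hkx hkm
    rcases Nat.lt_or_ge k 2 with h2 | h2
    · have hk : k = 1 := by omega
      subst hk
      exact cidx c (by omega) (by omega) (by omega)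
    · by_contra hcon
      have hck : c ⟨m-1-k, by omega⟩ = c ⟨m-1, by omega⟩ := fin2_eq_of_ne_ne hcon hne
      obtain ⟨l, hl1, hlj, hleq⟩ := mem_SC.mp hc (m-1-k) (k-1) (by omega) (by omega) (by omega)
        (hck.trans (cidx c (by omega) (by omega) (by omega)))
      have hih := ih (k - l) (by omega) (by omega) (by omega) (by omega)
      apply hne
      calc c ⟨m-1, by omega⟩ = c ⟨m-1-k, by omega⟩ := hck.symm
        _ = c ⟨m-1-k + l, by omega⟩ := hleq.symm
        _ = c ⟨m-1-(k-l), by omega⟩ := cidx c (by omega) (by omega) (by omega)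
        _ = c ⟨m-2, by omega⟩ := hih

lemma run_const' {x m : ℕ} {c : Fin m → Fin 2} (hc : c ∈ SC m x) (hm : 2 ≤ m)
    (hne : c ⟨m-1, by omega⟩ ≠ c ⟨m-2, by omega⟩) (q : ℕ) (hq1 : m - 2 - x ≤ q) (hq2 : q ≤ m - 2) :
    c ⟨q, by omega⟩ = c ⟨m-2, by omega⟩ := by
  have h := run_const hc hm hne (m-1-q) (by omega) (by omega) (by omega)
  exact (cidx c (by omega) (by omega) (by omega)).trans h

def extDup (m p : ℕ) (c : Fin p → Fin 2) : Fin m → Fin 2 := fun i =>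
  if h : i.val < p then c ⟨i.val, h⟩ else if h2 : p - 1 < p then c ⟨p-1, h2⟩ else 0

def extB (m p : ℕ) (c : Fin p → Fin 2) : Fin m → Fin 2 := fun i =>
  if h : i.val < p then c ⟨i.val, h⟩
  else if h2 : p - 1 < p then (if i.val + 1 < m then c ⟨p-1, h2⟩ else c ⟨p-1, h2⟩ + 1)
  else 0

lemma extDup_lt {m p : ℕ} (c : Fin p → Fin 2) {i : Fin m} (h : i.val < p) :
    extDup m p c i = c ⟨i.val, h⟩ := by
  simp only [extDup, dif_pos h]

lemma extDup_ge {m p : ℕ} (c : Fin p → Fin 2) (hp : 1 ≤ p) {i : Fin m} (h : p ≤ i.val) :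
    extDup m p c i = c ⟨p-1, by omega⟩ := by
  simp only [extDup]
  rw [dif_neg (by omega), dif_pos (by omega)]

lemma extB_lt {m p : ℕ} (c : Fin p → Fin 2) {i : Fin m} (h : i.val < p) :
    extB m p c i = c ⟨i.val, h⟩ := by
  simp only [extB, dif_pos h]

lemma extB_mid {m p : ℕ} (c : Fin p → Fin 2) (hp : 1 ≤ p) {i : Fin m} (h : p ≤ i.val)
    (h2 : i.val + 1 < m) : extB m p c i = c ⟨p-1, by omega⟩ := by
  simp only [extB]
  rw [dif_neg (by omega), dif_pos (by omega), if_pos h2]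

lemma extB_top {m p : ℕ} (c : Fin p → Fin 2) (hp : 1 ≤ p) {i : Fin m} (h : p ≤ i.val)
    (h2 : m ≤ i.val + 1) : extB m p c i = c ⟨p-1, by omega⟩ + 1 := by
  simp only [extB]
  rw [dif_neg (by omega), dif_pos (by omega), if_neg (by omega)]

lemma extB_low {m p : ℕ} (c : Fin p → Fin 2) (hp : 1 ≤ p) {i : Fin m} (h : p - 1 ≤ i.val)
    (h2 : i.val + 1 < m) : extB m p c i = c ⟨p-1, by omega⟩ := by
  rcases Nat.lt_or_ge i.val p with hi | hi
  · rw [extB_lt c hi]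
    exact cidx c (by omega) (by omega) (by omega)
  · exact extB_mid c hp hi h2

lemma extDup_lt' {m p : ℕ} (c : Fin p → Fin 2) {a : ℕ} (ha : a < m) (h : a < p) :
    extDup m p c ⟨a, ha⟩ = c ⟨a, h⟩ := extDup_lt c h

lemma extDup_ge' {m p : ℕ} (c : Fin p → Fin 2) (hp : 1 ≤ p) {a : ℕ} (ha : a < m) (h : p ≤ a) :
    extDup m p c ⟨a, ha⟩ = c ⟨p-1, by omega⟩ := extDup_ge c hp h

lemma extB_lt' {m p : ℕ} (c : Fin p → Fin 2) {a : ℕ} (ha : a < m) (h : a < p) :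
    extB m p c ⟨a, ha⟩ = c ⟨a, h⟩ := extB_lt c h

lemma extB_low' {m p : ℕ} (c : Fin p → Fin 2) (hp : 1 ≤ p) {a : ℕ} (ha : a < m)
    (h : p - 1 ≤ a) (h2 : a + 1 < m) : extB m p c ⟨a, ha⟩ = c ⟨p-1, by omega⟩ :=
  extB_low c hp h h2

lemma extB_top' {m p : ℕ} (c : Fin p → Fin 2) (hp : 1 ≤ p) {a : ℕ} (ha : a < m)
    (h : p ≤ a) (h2 : m ≤ a + 1) : extB m p c ⟨a, ha⟩ = c ⟨p-1, by omega⟩ + 1 :=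
  extB_top c hp h h2

lemma extDup_inj {m p : ℕ} (hpm : p ≤ m) : Function.Injective (extDup m p) := by
  intro c c' hcc
  funext i
  have h := congrFun hcc ⟨i.val, by omega⟩
  rw [extDup_lt' c _ i.isLt, extDup_lt' c' _ i.isLt] at h
  exact h

lemma extB_inj {m p : ℕ} (hpm : p ≤ m) : Function.Injective (extB m p) := by
  intro c c' hcc
  funext i
  have h := congrFun hcc ⟨i.val, by omega⟩
  rw [extB_lt' c _ i.isLt, extB_lt' c' _ i.isLt] at h
  exact h

lemma extDup_mem {x p : ℕ} (hp : 1 ≤ p) {c : Fin p → Fin 2} (hc : c ∈ SC p x) :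
    extDup (p+1) p c ∈ SC (p+1) x := by
  rw [mem_SC] at hc ⊢
  intro i j h hj1 hjx heq
  rcases Nat.lt_or_ge (i+j+1) p with hlt | hge
  · rw [extDup_lt' c _ (show i < p by omega), extDup_lt' c _ hlt] at heq
    obtain ⟨k, hk1, hkj, hkeq⟩ := hc i j hlt hj1 hjx heq
    refine ⟨k, hk1, hkj, ?_⟩
    rw [extDup_lt' c _ (show i + k < p by omega), extDup_lt' c _ (show i < p by omega)]
    exact hkeq
  · refine ⟨j, hj1, le_rfl, ?_⟩
    rw [heq, extDup_ge' c hp _ hge, extDup_lt' c _ (show i + j < p by omega)]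
    exact cidx c (by omega) (by omega) (by omega)

lemma extB_mem_big {x p : ℕ} (hp : 1 ≤ p) (hx : 1 ≤ x) {c : Fin p → Fin 2} (hc : c ∈ SC p x) :
    extB (p+x+1) p c ∈ SC (p+x+1) x := by
  rw [mem_SC] at hc ⊢
  intro i j h hj1 hjx heq
  rcases Nat.lt_or_ge (i+j+1) p with hlt | hge
  · rw [extB_lt' c _ (show i < p by omega), extB_lt' c _ hlt] at heq
    obtain ⟨k, hk1, hkj, hkeq⟩ := hc i j hlt hj1 hjx heq
    refine ⟨k, hk1, hkj, ?_⟩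
    rw [extB_lt' c _ (show i + k < p by omega), extB_lt' c _ (show i < p by omega)]
    exact hkeq
  · rcases Nat.lt_or_ge (i+j+1+1) (p+x+1) with hmidc | htopc
    · -- top of pattern is in the middle b-zone
      refine ⟨j, hj1, le_rfl, ?_⟩
      rw [heq, extB_low' c hp (a := i+j+1) (by omega) (by omega) hmidc,
          extB_low' c hp (a := i+j) (by omega) (by omega) (by omega)]
    · -- top of pattern is the very last position, value b+1; bottom must be b : contradiction
      exfalso
      rw [extB_top' c hp _ hge htopc, extB_low' c hp (a := i) (by omega) (by omega) (by omega)] at heq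
      exact fin2_add_one_ne _ heq.symm

lemma extB_mem_one {x m : ℕ} (hm : 2 ≤ m) (hmx : m ≤ x + 2) (c : Fin 1 → Fin 2) :
    extB m 1 c ∈ SC m x := by
  rw [mem_SC]
  intro i j h hj1 hjx heq
  rcases Nat.lt_or_ge (i+j+1+1) m with hmidc | htopc
  · refine ⟨j, hj1, le_rfl, ?_⟩
    rw [heq, extB_low' c le_rfl (a := i+j+1) (by omega) (by omega) hmidc,
        extB_low' c le_rfl (a := i+j) (by omega) (by omega) (by omega)]
  · exfalso
    rw [extB_top' c le_rfl (a := i+j+1) (by omega) (by omega) htopc,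
        extB_low' c le_rfl (a := i) (by omega) (by omega) (by omega)] at heq
    exact fin2_add_one_ne _ heq.symm

lemma card_one (x : ℕ) : (SC 1 x).ncard = 2 := by
  have h : SC 1 x = Set.univ := by
    ext c
    simp only [Set.mem_univ, iff_true]
    rintro ⟨i, j, h, hj1, -⟩
    omega
  rw [h, Set.ncard_univ, Nat.card_eq_fintype_card, Fintype.card_fun]
  simp

lemma card_split (x n : ℕ) (hn : 1 ≤ n) :
    (SC (n+1) x).ncard =
      (SC n x).ncard +
        (SC (n+1) x ∩ {w | w ⟨n, by omega⟩ ≠ w ⟨n-1, by omega⟩}).ncard := by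
  have hA : SC (n+1) x ∩ {w | w ⟨n, by omega⟩ = w ⟨n-1, by omega⟩} = extDup (n+1) n '' SC n x := by
    ext w
    constructor
    · rintro ⟨hw, hww⟩
      refine ⟨_, restrict_mem (show n ≤ n+1 by omega) hw, ?_⟩
      funext i
      obtain ⟨a, ha⟩ := i
      rcases Nat.lt_or_ge a n with hi | hi
      · rw [extDup_lt' _ _ hi]
      · rw [extDup_ge' _ hn _ hi]
        have h1 : a = n := by omega
        subst h1
        exact hww.symm
    · rintro ⟨c, hc, rfl⟩
      refine ⟨extDup_mem hn hc, ?_⟩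
      show extDup (n+1) n c ⟨n, by omega⟩ = extDup (n+1) n c ⟨n-1, by omega⟩
      rw [extDup_ge' c hn _ le_rfl, extDup_lt' c _ (show n-1 < n by omega)]
  have hsplit : SC (n+1) x =
      (SC (n+1) x ∩ {w | w ⟨n, by omega⟩ = w ⟨n-1, by omega⟩}) ∪
      (SC (n+1) x ∩ {w | w ⟨n, by omega⟩ ≠ w ⟨n-1, by omega⟩}) := by
    ext w
    by_cases hw : w ⟨n, by omega⟩ = w ⟨n-1, by omega⟩ <;>
      simp [Set.mem_union, Set.mem_inter_iff, Set.mem_setOf_eq, hw]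
  have hdisj : Disjoint (SC (n+1) x ∩ {w | w ⟨n, by omega⟩ = w ⟨n-1, by omega⟩})
      (SC (n+1) x ∩ {w | w ⟨n, by omega⟩ ≠ w ⟨n-1, by omega⟩}) := by
    rw [Set.disjoint_left]
    rintro w ⟨-, h1⟩ ⟨-, h2⟩
    exact h2 h1
  calc (SC (n+1) x).ncard
      = ((SC (n+1) x ∩ {w | w ⟨n, by omega⟩ = w ⟨n-1, by omega⟩}) ∪
         (SC (n+1) x ∩ {w | w ⟨n, by omega⟩ ≠ w ⟨n-1, by omega⟩})).ncard :=
        congrArg Set.ncard hsplit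
    _ = (SC (n+1) x ∩ {w | w ⟨n, by omega⟩ = w ⟨n-1, by omega⟩}).ncard +
        (SC (n+1) x ∩ {w | w ⟨n, by omega⟩ ≠ w ⟨n-1, by omega⟩}).ncard :=
        Set.ncard_union_eq hdisj (Set.toFinite _) (Set.toFinite _)
    _ = (SC n x).ncard + (SC (n+1) x ∩ {w | w ⟨n, by omega⟩ ≠ w ⟨n-1, by omega⟩}).ncard := by
        rw [hA, Set.ncard_image_of_injective _ (extDup_inj (show n ≤ n+1 by omega))]

lemma card_B_small (x n : ℕ) (hn : 1 ≤ n) (hnx : n ≤ x) :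
    (SC (n+1) x ∩ {w | w ⟨n, by omega⟩ ≠ w ⟨n-1, by omega⟩}).ncard = 2 := by
  have himg : SC (n+1) x ∩ {w | w ⟨n, by omega⟩ ≠ w ⟨n-1, by omega⟩} =
      extB (n+1) 1 '' (Set.univ : Set (Fin 1 → Fin 2)) := by
    ext w
    constructor
    · rintro ⟨hw, hww⟩
      refine ⟨fun i : Fin 1 => w ⟨i.val, lt_of_lt_of_le i.isLt (by omega)⟩, trivial, ?_⟩
      funext i
      obtain ⟨a, ha⟩ := i
      have ha1 := run_const' hw (show 2 ≤ n+1 by omega) hww 0 (by omega) (by omega)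
      rcases Nat.lt_or_ge (a+1) (n+1) with hi | hi
      · rw [extB_low' _ le_rfl (a := a) (by omega) (by omega) hi]
        have ha2 := run_const' hw (show 2 ≤ n+1 by omega) hww a (by omega) (by omega)
        exact ha1.trans ha2.symm
      · have haeq : a = n := by omega
        subst haeq
        rw [extB_top' _ le_rfl (a := a) (by omega) (by omega) (by omega)]
        have h1 := fin2_eq_add_one hww
        exact (congrArg (· + 1) ha1).trans h1.symm
    · rintro ⟨c, -, rfl⟩
      refine ⟨extB_mem_one (by omega) (by omega) c, ?_⟩
      show extB (n+1) 1 c ⟨n, by omega⟩ ≠ extB (n+1) 1 c ⟨n-1, by omega⟩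
      rw [extB_top' c le_rfl (a := n) (by omega) (by omega) (by omega),
          extB_low' c le_rfl (a := n-1) (by omega) (by omega) (by omega)]
      exact fin2_add_one_ne _
  rw [himg, Set.ncard_image_of_injective _ (extB_inj (show 1 ≤ n+1 by omega)),
      Set.ncard_univ, Nat.card_eq_fintype_card, Fintype.card_fun]
  simp

lemma card_B_big (x p : ℕ) (hx : 1 ≤ x) (hp : 1 ≤ p) :
    (SC (p+x+1) x ∩ {w | w ⟨p+x, by omega⟩ ≠ w ⟨p+x-1, by omega⟩}).ncard = (SC p x).ncard := by
  have himg : SC (p+x+1) x ∩ {w | w ⟨p+x, by omega⟩ ≠ w ⟨p+x-1, by omega⟩} =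
      extB (p+x+1) p '' SC p x := by
    ext w
    constructor
    · rintro ⟨hw, hww⟩
      refine ⟨_, restrict_mem (show p ≤ p+x+1 by omega) hw, ?_⟩
      funext i
      obtain ⟨a, ha⟩ := i
      have ha1 := run_const' hw (show 2 ≤ p+x+1 by omega) hww (p-1) (by omega) (by omega)
      rcases Nat.lt_or_ge a p with hi | hi
      · rw [extB_lt' _ _ hi]
      · rcases Nat.lt_or_ge (a+1) (p+x+1) with h2 | h2
        · rw [extB_low' _ hp (a := a) (by omega) (by omega) h2]
          have ha2 := run_const' hw (show 2 ≤ p+x+1 by omega) hww a (by omega) (by omega)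
          exact ha1.trans ha2.symm
        · have haeq : a = p + x := by omega
          subst haeq
          rw [extB_top' _ hp (a := p+x) (by omega) (by omega) (by omega)]
          have h1 := fin2_eq_add_one hww
          exact (congrArg (· + 1) ha1).trans h1.symm
    · rintro ⟨c, hc, rfl⟩
      refine ⟨extB_mem_big hp hx hc, ?_⟩
      show extB (p+x+1) p c ⟨p+x, by omega⟩ ≠ extB (p+x+1) p c ⟨p+x-1, by omega⟩
      rw [extB_top' c hp (a := p+x) (by omega) (by omega) (by omega),
          extB_low' c hp (a := p+x-1) (by omega) (by omega) (by omega)]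
      exact fin2_add_one_ne _
  rw [himg, Set.ncard_image_of_injective _ (extB_inj (show p ≤ p+x+1 by omega))]

theorem stmt2 (x : ℕ) (hx : 1 ≤ x) (f : ℤ → ℕ)
    (hbase : ∀ m : ℤ, 1 - (x : ℤ) ≤ m → m ≤ 1 → f m = 2)
    (hrec : ∀ m : ℤ, 2 ≤ m → f m = f (m - 1) + f (m - x - 1)) :
    ∀ m : ℕ, 1 ≤ m → (SC m x).ncard = f m := by
  intro m
  induction m using Nat.strong_induction_on with
  | _ m ih =>
    intro hm
    rcases Nat.lt_or_ge m 2 with h2 | h2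
    · have hm1 : m = 1 := by omega
      subst hm1
      rw [card_one, show ((1:ℕ):ℤ) = 1 from Nat.cast_one, hbase 1 (by omega) (by omega)]
    · obtain ⟨n, rfl⟩ : ∃ n, m = n + 1 := ⟨m - 1, by omega⟩
      have hn : 1 ≤ n := by omega
      rcases Nat.lt_or_ge n (x+1) with hsm | hbg
      · rw [card_split x n hn, card_B_small x n hn (by omega), ih n (by omega) hn]
        have e0 : ((n+1 : ℕ) : ℤ) = (n : ℤ) + 1 := by push_cast; ring
        rw [e0, hrec ((n:ℤ)+1) (by omega)]
        have e1 : ((n:ℤ) + 1) - 1 = (n : ℤ) := by ring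
        have e2 : f (((n:ℤ) + 1) - x - 1) = 2 := hbase _ (by omega) (by omega)
        rw [e1, e2]
      · obtain ⟨p, rfl⟩ : ∃ p, n = p + x := ⟨n - x, by omega⟩
        have hp : 1 ≤ p := by omega
        rw [card_split x (p+x) (by omega), card_B_big x p hx hp,
            ih (p+x) (by omega) (by omega), ih p (by omega) hp]
        have e0 : ((p+x+1 : ℕ) : ℤ) = ((p+x : ℕ) : ℤ) + 1 := by push_cast; ring
        rw [e0, hrec (((p+x : ℕ) : ℤ)+1) (by push_cast; omega)]
        have e1 : (((p+x : ℕ):ℤ) + 1) - 1 = ((p+x : ℕ) : ℤ) := by ring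
        have e2 : (((p+x : ℕ):ℤ) + 1) - x - 1 = ((p : ℕ) : ℤ) := by push_cast; ring
        rw [e1, e2]
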